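/- Let {Zᵗ}_{t≥0} be a supermartingale adapted to a filtration {Fᵗ} with Z⁰ = 0, and let {Yᵗ} be a stochastic process adapted to {Fᵗ}. Suppose there is c > 0 such that for every t ≥ 0 the event {|Z^{t+1} − Zᵗ| > c} is contained in {Yᵗ > 0}. Then for any z > 0 and t ≥ 1: P(Zᵗ ≥ z) ≤ exp(−z²/(2c²t)) + Σ_{τ=0}^{t−1} P(Y^τ > 0). -/

import Mathlib

open MeasureTheory

private lemma exp_le_affine {c l x : ℝ} (hc : 0 < c) (hl : 0 ≤ l) (hx : |x| ≤ c) :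
    Real.exp (l * x) ≤ Real.cosh (l * c) + (Real.sinh (l * c) / c) * x := by
  have hx1 : -c ≤ x := neg_le_of_abs_le hx
  have hx2 : x ≤ c := le_of_abs_le hx
  set θ : ℝ := (c + x) / (2 * c) with hθ
  have hθ0 : 0 ≤ θ := div_nonneg (by linarith) (by linarith)
  have hθ1 : 0 ≤ 1 - θ := by
    have : θ ≤ 1 := (div_le_one (by linarith)).mpr (by linarith)
    linarith
  have key := convexOn_exp.2 (Set.mem_univ (l * c)) (Set.mem_univ (-(l * c)))
    hθ0 hθ1 (by ring)
  simp only [smul_eq_mul] at key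
  have harg : θ * (l * c) + (1 - θ) * (-(l * c)) = l * x := by
    rw [hθ]
    field_simp
    ring
  rw [harg] at key
  refine key.trans (le_of_eq ?_)
  rw [Real.cosh_eq, Real.sinh_eq, hθ]
  field_simp
  ring

private lemma azuma_aux {Ω : Type*} {m0 : MeasurableSpace Ω} {μ : Measure Ω}
    [IsProbabilityMeasure μ] (ℱ : Filtration ℕ m0) (ξ : ℕ → Ω → ℝ)
    (hmeas : ∀ n, StronglyMeasurable[ℱ (n + 1)] (ξ n))
    (c : ℝ) (hc : 0 < c) (hbdd : ∀ n ω, |ξ n ω| ≤ c)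
    (hcond : ∀ n, μ[ξ n | ℱ n] ≤ᵐ[μ] 0)
    (l : ℝ) (hl : 0 ≤ l) :
    ∀ n, ∫ ω, Real.exp (l * ∑ τ ∈ Finset.range n, ξ τ ω) ∂μ
      ≤ Real.exp (l ^ 2 * c ^ 2 / 2) ^ n := by
  intro n
  induction n with
  | zero => simp
  | succ n ih =>
    set K := Real.exp (l ^ 2 * c ^ 2 / 2) with hK
    set A := Real.cosh (l * c) with hA
    set B := Real.sinh (l * c) / c with hB
    set f : Ω → ℝ := fun ω => Real.exp (l * ∑ τ ∈ Finset.range n, ξ τ ω) with hf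
    set g : Ω → ℝ := fun ω => Real.exp (l * ξ n ω) with hg
    have hSmeas : StronglyMeasurable[ℱ n] (fun ω => ∑ τ ∈ Finset.range n, ξ τ ω) := by
      apply Finset.stronglyMeasurable_fun_sum
      intro τ hτ
      exact (hmeas τ).mono (ℱ.mono (Finset.mem_range.mp hτ))
    have hfmeas : StronglyMeasurable[ℱ n] f :=
      Real.continuous_exp.comp_stronglyMeasurable (hSmeas.const_mul l)
    have hfb : ∀ ω, ‖f ω‖ ≤ Real.exp (l * (c * n)) := by
      intro ω
      rw [Real.norm_eq_abs, abs_of_pos (Real.exp_pos _), Real.exp_le_exp]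
      have h1 : ∑ τ ∈ Finset.range n, ξ τ ω ≤ c * n := by
        calc ∑ τ ∈ Finset.range n, ξ τ ω ≤ ∑ τ ∈ Finset.range n, c :=
              Finset.sum_le_sum fun τ _ => le_of_abs_le (hbdd τ ω)
          _ = c * n := by simp [mul_comm]
      exact mul_le_mul_of_nonneg_left h1 hl
    have hfpos : ∀ ω, 0 ≤ f ω := fun ω => (Real.exp_pos _).le
    have hfint : Integrable f μ :=
      (integrable_const (Real.exp (l * (c * n)))).mono'
        ((hfmeas.mono (ℱ.le n)).aestronglyMeasurable)
        (Filter.Eventually.of_forall hfb)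
    have hgmeas : StronglyMeasurable[m0] g :=
      Real.continuous_exp.comp_stronglyMeasurable
        ((((hmeas n).mono (ℱ.le (n + 1)))).const_mul l)
    have hgb : ∀ ω, ‖g ω‖ ≤ Real.exp (l * c) := by
      intro ω
      rw [Real.norm_eq_abs, abs_of_pos (Real.exp_pos _), Real.exp_le_exp]
      exact mul_le_mul_of_nonneg_left (le_of_abs_le (hbdd n ω)) hl
    have hgint : Integrable g μ :=
      (integrable_const (Real.exp (l * c))).mono' hgmeas.aestronglyMeasurable
        (Filter.Eventually.of_forall hgb)
    have hξint : Integrable (ξ n) μ :=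
      (integrable_const c).mono'
        (((hmeas n).mono (ℱ.le (n + 1))).aestronglyMeasurable)
        (Filter.Eventually.of_forall fun ω => by
          rw [Real.norm_eq_abs]; exact hbdd n ω)
    have hfgint : Integrable (f * g) μ :=
      hgint.bdd_mul ((hfmeas.mono (ℱ.le n)).aestronglyMeasurable)
        (Filter.Eventually.of_forall hfb)
    -- conditional bound on g
    have hpt : ∀ ω, g ω ≤ A + B * ξ n ω := fun ω => exp_le_affine hc hl (hbdd n ω)
    have haffint : Integrable (fun ω => A + B * ξ n ω) μ :=
      (integrable_const A).add (hξint.const_mul B)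
    have h1 : μ[g | ℱ n] ≤ᵐ[μ] μ[fun ω => A + B * ξ n ω | ℱ n] :=
      condExp_mono hgint haffint (Filter.Eventually.of_forall hpt)
    have h2 : μ[fun ω => A + B * ξ n ω | ℱ n]
        =ᵐ[μ] fun ω => A + B * (μ[ξ n | ℱ n]) ω := by
      calc μ[fun ω => A + B * ξ n ω | ℱ n]
          =ᵐ[μ] μ[(fun _ => A) | ℱ n] + μ[B • ξ n | ℱ n] := by
            have : (fun ω => A + B * ξ n ω) = (fun _ => A) + B • ξ n := by
              funext ω; simp [smul_eq_mul]
            rw [this]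
            exact condExp_add (integrable_const A) (hξint.smul B) _
        _ =ᵐ[μ] (fun _ => A) + B • μ[ξ n | ℱ n] := by
            rw [condExp_const (ℱ.le n) A]
            exact Filter.EventuallyEq.add (Filter.EventuallyEq.refl _ _) (condExp_smul B (ξ n) _)
        _ = fun ω => A + B * (μ[ξ n | ℱ n]) ω := by
            funext ω; simp [smul_eq_mul]
    have hB0 : 0 ≤ B := div_nonneg (Real.sinh_nonneg_iff.mpr (by positivity)) hc.le
    have hAK : A ≤ K := by
      have := Real.cosh_le_exp_half_sq (l * c)
      rw [hA, hK]
      convert this using 2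
      ring
    have hfin : μ[g | ℱ n] ≤ᵐ[μ] fun _ => K := by
      filter_upwards [h1, h2, hcond n] with ω hω1 hω2 hω3
      have hω3' : (μ[ξ n | ℱ n]) ω ≤ 0 := hω3
      have hle : (μ[g | ℱ n]) ω ≤ A + B * (μ[ξ n | ℱ n]) ω := hω2 ▸ hω1
      nlinarith [mul_le_mul_of_nonneg_left hω3' hB0]
    have hKpos : 0 < K := Real.exp_pos _
    -- main chain
    have hmulint : Integrable (fun ω => f ω * (μ[g | ℱ n]) ω) μ := by
      have := integrable_condExp.bdd_mul (f := f) (g := μ[g | ℱ n])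
        ((hfmeas.mono (ℱ.le n)).aestronglyMeasurable)
        (Filter.Eventually.of_forall hfb)
      exact this
    calc ∫ ω, Real.exp (l * ∑ τ ∈ Finset.range (n + 1), ξ τ ω) ∂μ
        = ∫ ω, (f * g) ω ∂μ := by
          congr 1
          funext ω
          simp only [Pi.mul_apply, hf, hg, ← Real.exp_add, Finset.sum_range_succ, mul_add]
      _ = ∫ ω, (μ[f * g | ℱ n]) ω ∂μ := (integral_condExp (ℱ.le n)).symm
      _ = ∫ ω, f ω * (μ[g | ℱ n]) ω ∂μ := by
          refine integral_congr_ae ?_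
          filter_upwards [condExp_stronglyMeasurable_mul_of_bound (ℱ.le n) hfmeas hgint
            (Real.exp (l * (c * n))) (Filter.Eventually.of_forall hfb)] with ω hω
          simpa using hω
      _ ≤ ∫ ω, f ω * K ∂μ := by
          refine integral_mono_ae hmulint (hfint.mul_const K) ?_
          filter_upwards [hfin] with ω hω
          exact mul_le_mul_of_nonneg_left hω (hfpos ω)
      _ = K * ∫ ω, f ω ∂μ := by rw [integral_mul_const, mul_comm]
      _ ≤ K * K ^ n := mul_le_mul_of_nonneg_left ih hKpos.le
      _ = K ^ (n + 1) := by ring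

/-- Generalized Azuma–Hoeffding inequality for supermartingales with possibly
unbounded increments (Yu–Neely–Wei 2017): if the event of an increment larger
than `c` is contained in `{Yᵗ > 0}`, then
`P(Zᵗ ≥ z) ≤ exp(−z²/(2c²t)) + Σ_{τ<t} P(Y^τ > 0)`. -/
theorem stmt_11 {Ω : Type*} {m0 : MeasurableSpace Ω} {μ : Measure Ω}
    [IsProbabilityMeasure μ] (ℱ : Filtration ℕ m0)
    (Z Y : ℕ → Ω → ℝ)
    (hZ : Supermartingale Z ℱ μ)
    (hZ0 : ∀ ω, Z 0 ω = 0)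
    (hY : Adapted ℱ Y)
    (c : ℝ) (hc : 0 < c)
    (hsub : ∀ t : ℕ, {ω | c < |Z (t + 1) ω - Z t ω|} ⊆ {ω | 0 < Y t ω})
    (z : ℝ) (hz : 0 < z) (t : ℕ) (ht : 1 ≤ t) :
    μ {ω | z ≤ Z t ω}
      ≤ ENNReal.ofReal (Real.exp (-z ^ 2 / (2 * c ^ 2 * t)))
        + ∑ τ ∈ Finset.range t, μ {ω | 0 < Y τ ω} := by
  have htpos : (0 : ℝ) < t := by exact_mod_cast ht
  -- truncated increments
  set ξ : ℕ → Ω → ℝ :=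
    fun τ => Set.indicator {ω | Y τ ω ≤ 0} (fun ω => Z (τ + 1) ω - Z τ ω) with hξ
  have hsY : ∀ τ, MeasurableSet[ℱ τ] {ω | Y τ ω ≤ 0} := fun τ =>
    measurableSet_le (hY τ) measurable_const
  have hmeas : ∀ n, StronglyMeasurable[ℱ (n + 1)] (ξ n) := fun n =>
    ((hZ.stronglyAdapted (n + 1)).sub ((hZ.stronglyAdapted n).mono (ℱ.mono n.le_succ))).indicator
      (ℱ.mono n.le_succ _ (hsY n))
  have hbdd : ∀ n ω, |ξ n ω| ≤ c := by
    intro n ω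
    simp only [hξ, Set.indicator_apply, Set.mem_setOf_eq]
    split_ifs with h
    · by_contra hlt
      exact absurd (hsub n (not_le.mp hlt)) (not_lt.mpr h)
    · simpa using hc.le
  have hcond : ∀ n, μ[ξ n | ℱ n] ≤ᵐ[μ] 0 := by
    intro n
    set w : Ω → ℝ := Set.indicator {ω | Y n ω ≤ 0} (fun _ => (1 : ℝ)) with hw
    have hwmeas : StronglyMeasurable[ℱ n] w :=
      stronglyMeasurable_const.indicator (hsY n)
    have hwb : ∀ ω, ‖w ω‖ ≤ (1 : ℝ) := by
      intro ω
      simp only [hw, Real.norm_eq_abs, Set.indicator_apply, Set.mem_setOf_eq]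
      split_ifs with h <;> simp
    have hw0 : ∀ ω, 0 ≤ w ω := by
      intro ω
      simp only [hw, Set.indicator_apply, Set.mem_setOf_eq]
      split_ifs with h <;> norm_num
    have hDint : Integrable (fun ω => Z (n + 1) ω - Z n ω) μ :=
      (hZ.integrable (n + 1)).sub (hZ.integrable n)
    have hDeq : ξ n = w * fun ω => Z (n + 1) ω - Z n ω := by
      funext ω
      simp only [hξ, hw, Pi.mul_apply, Set.indicator_apply, Set.mem_setOf_eq]
      split_ifs with h <;> simp
    have h1 : μ[ξ n | ℱ n] =ᵐ[μ] w * μ[(fun ω => Z (n + 1) ω - Z n ω) | ℱ n] := by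
      rw [hDeq]
      exact condExp_stronglyMeasurable_mul_of_bound (ℱ.le n) hwmeas hDint 1
        (Filter.Eventually.of_forall hwb)
    have h2 : μ[(fun ω => Z (n + 1) ω - Z n ω) | ℱ n]
        =ᵐ[μ] μ[Z (n + 1) | ℱ n] - μ[Z n | ℱ n] :=
      condExp_sub (hZ.integrable (n + 1)) (hZ.integrable n) _
    have h3 : μ[Z n | ℱ n] = Z n :=
      condExp_of_stronglyMeasurable (ℱ.le n) (hZ.stronglyAdapted n) (hZ.integrable n)
    have h4 : μ[Z (n + 1) | ℱ n] ≤ᵐ[μ] Z n := hZ.condExp_ae_le (Nat.le_succ n)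
    filter_upwards [h1, h2, h4] with ω hω1 hω2 hω4
    have : (μ[ξ n | ℱ n]) ω = w ω * ((μ[Z (n + 1) | ℱ n]) ω - Z n ω) := by
      rw [hω1]
      simp only [Pi.mul_apply]
      congr 1
      rw [hω2]
      simp [h3]
    rw [this]
    simp only [Pi.zero_apply]
    have hneg : (μ[Z (n + 1) | ℱ n]) ω - Z n ω ≤ 0 := by
      have := hω4
      linarith [hω4]
    nlinarith [hw0 ω]
  -- apply the Azuma mgf bound with optimal parameter
  set l : ℝ := z / (c ^ 2 * t) with hl
  have hl0 : 0 ≤ l := by positivity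
  set X : Ω → ℝ := fun ω => ∑ τ ∈ Finset.range t, ξ τ ω with hX
  have hmgf := azuma_aux ℱ ξ hmeas c hc hbdd hcond l hl0 t
  have hXmeas : StronglyMeasurable[m0] X := by
    refine (Finset.stronglyMeasurable_fun_sum _ fun τ hτ => ?_)
    exact ((hmeas τ).mono (ℱ.le (τ + 1)))
  have hintexp : Integrable (fun ω => Real.exp (l * X ω)) μ := by
    refine (integrable_const (Real.exp (l * (c * t)))).mono'
      (Real.continuous_exp.comp_stronglyMeasurable
        (hXmeas.const_mul l)).aestronglyMeasurable
      (Filter.Eventually.of_forall fun ω => ?_)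
    rw [Real.norm_eq_abs, abs_of_pos (Real.exp_pos _), Real.exp_le_exp]
    refine mul_le_mul_of_nonneg_left ?_ hl0
    calc X ω ≤ ∑ τ ∈ Finset.range t, c :=
          Finset.sum_le_sum fun τ _ => le_of_abs_le (hbdd τ ω)
      _ = c * t := by simp [mul_comm]
  have hch := ProbabilityTheory.measure_ge_le_exp_mul_mgf (X := X) (μ := μ) (t := l)
    z hl0 hintexp
  have hmgf' : ProbabilityTheory.mgf X μ l ≤ Real.exp (l ^ 2 * c ^ 2 / 2) ^ t := hmgf
  have hexp_eq : Real.exp (-l * z) * Real.exp (l ^ 2 * c ^ 2 / 2) ^ t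
      = Real.exp (-z ^ 2 / (2 * c ^ 2 * t)) := by
    rw [← Real.exp_nat_mul, ← Real.exp_add]
    congr 1
    rw [hl]
    field_simp
    ring
  have hXbound : μ {ω | z ≤ X ω} ≤ ENNReal.ofReal (Real.exp (-z ^ 2 / (2 * c ^ 2 * t))) := by
    rw [← ENNReal.ofReal_toReal (measure_ne_top μ {ω | z ≤ X ω})]
    refine ENNReal.ofReal_le_ofReal ?_
    calc (μ {ω | z ≤ X ω}).toReal
        ≤ Real.exp (-l * z) * ProbabilityTheory.mgf X μ l := hch
      _ ≤ Real.exp (-l * z) * Real.exp (l ^ 2 * c ^ 2 / 2) ^ t :=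
          mul_le_mul_of_nonneg_left hmgf' (Real.exp_pos _).le
      _ = Real.exp (-z ^ 2 / (2 * c ^ 2 * t)) := hexp_eq
  -- union bound
  have hsubset : {ω | z ≤ Z t ω}
      ⊆ {ω | z ≤ X ω} ∪ ⋃ τ ∈ Finset.range t, {ω | 0 < Y τ ω} := by
    intro ω hω
    by_cases hcase : ∀ τ ∈ Finset.range t, ¬(0 < Y τ ω)
    · left
      have hXZ : X ω = Z t ω := by
        rw [hX]
        calc ∑ τ ∈ Finset.range t, ξ τ ω
            = ∑ τ ∈ Finset.range t, (Z (τ + 1) ω - Z τ ω) := by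
              refine Finset.sum_congr rfl fun τ hτ => ?_
              simp only [hξ, Set.indicator_apply, Set.mem_setOf_eq,
                if_pos (not_lt.mp (hcase τ hτ))]
          _ = Z t ω - Z 0 ω := Finset.sum_range_sub (fun i => Z i ω) t
          _ = Z t ω := by rw [hZ0 ω]; ring
      exact Set.mem_setOf.mpr (hXZ ▸ hω)
    · right
      push_neg at hcase
      obtain ⟨τ, hτ, h⟩ := hcase
      exact Set.mem_biUnion hτ h
  calc μ {ω | z ≤ Z t ω}
      ≤ μ ({ω | z ≤ X ω} ∪ ⋃ τ ∈ Finset.range t, {ω | 0 < Y τ ω}) :=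
        measure_mono hsubset
    _ ≤ μ {ω | z ≤ X ω} + μ (⋃ τ ∈ Finset.range t, {ω | 0 < Y τ ω}) :=
        measure_union_le _ _
    _ ≤ ENNReal.ofReal (Real.exp (-z ^ 2 / (2 * c ^ 2 * t)))
        + ∑ τ ∈ Finset.range t, μ {ω | 0 < Y τ ω} :=
        add_le_add hXbound (measure_biUnion_finset_le _ _)
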